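/- arXiv:1302.4101 — 6 statements merged into one kernel-verified Lean document; each statement's English description precedes it below -/
import Mathlib

section
/- Let (X, d_X) and (Y, d_Y) be metric spaces equipped with their Borel σ-algebras, let G : X → Y be Borel measurable, and let b : [0,∞) → [0,∞) be monotone non-decreasing. Assume the deterministic stability estimate d_X(a₁, a₂) ≤ b(d_Y(G(a₁), G(a₂))) holds for all a₁, a₂ ∈ X. Then for every measure μ on X, every a† ∈ X and every ε ≥ 0 one has μ({a ∈ X : d_X(a, a†) ≤ b(ε)}) ≥ (G_*μ)({p ∈ Y : d_Y(p, G(a†)) ≤ ε}). -/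
open MeasureTheory

/-- If the stability estimate `d_X(a₁,a₂) ≤ b(d_Y(G a₁, G a₂))` holds for a
monotone `b : [0,∞) → [0,∞)`, then for any measure `μ` on `X`, any `a† ∈ X` and any `ε ≥ 0`,
`μ {a | d(a,a†) ≤ b ε} ≥ (G_*μ) {p | d(p, G a†) ≤ ε}`. -/
theorem pushforward_ball_stability
    {X Y : Type*} [MetricSpace X] [MetricSpace Y]
    [MeasurableSpace X] [BorelSpace X] [MeasurableSpace Y] [BorelSpace Y]
    (G : X → Y) (hG : Measurable G)
    (b : ℝ → ℝ)
    (hb_nonneg : ∀ x : ℝ, 0 ≤ x → 0 ≤ b x)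
    (hb_mono : MonotoneOn b (Set.Ici (0 : ℝ)))
    (hstab : ∀ a₁ a₂ : X, dist a₁ a₂ ≤ b (dist (G a₁) (G a₂)))
    (μ : Measure X) (adag : X) (ε : ℝ) (hε : 0 ≤ ε) :
    (μ.map G) {p : Y | dist p (G adag) ≤ ε} ≤ μ {a : X | dist a adag ≤ b ε} := by
  rw [Measure.map_apply hG (show MeasurableSet {p : Y | dist p (G adag) ≤ ε} from measurableSet_closedBall)]
  apply measure_mono
  intro a ha
  simp only [Set.mem_preimage, Set.mem_setOf_eq] at ha ⊢
  calc dist a adag ≤ b (dist (G a) (G adag)) := hstab a adag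
    _ ≤ b ε := hb_mono dist_nonneg hε ha
end

section
/- Let (X, d_X) and (Y, d_Y) be metric spaces equipped with their Borel σ-algebras, let G : X → Y be Borel measurable, and let b : [0,∞) → [0,∞) be monotone non-decreasing with b(0) = 0, satisfying the stability estimate d_X(a₁, a₂) ≤ b(d_Y(G(a₁), G(a₂))) for all a₁, a₂ ∈ X. Let a† ∈ X, let (μ_n) be a sequence of probability measures on X and let (ε_n) be a sequence of positive reals. If (G_*μ_n)({p ∈ Y : d_Y(p, G(a†)) ≤ ε_n}) → 1 as n → ∞, then μ_n({a ∈ X : d_X(a, a†) ≤ b(ε_n)}) → 1 as n → ∞. -/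
open MeasureTheory Filter

/-- A deterministic stability estimate transfers posterior consistency of the
pushforward measures (with rate `ε_n`) to posterior consistency of the original measures
(with rate `b ε_n`). -/
theorem posterior_consistency_through_stability
    {X Y : Type*} [MetricSpace X] [MetricSpace Y]
    [MeasurableSpace X] [BorelSpace X] [MeasurableSpace Y] [BorelSpace Y]
    (G : X → Y) (hG : Measurable G)
    (b : ℝ → ℝ)
    (hb_nonneg : ∀ x : ℝ, 0 ≤ x → 0 ≤ b x)
    (hb_mono : MonotoneOn b (Set.Ici (0 : ℝ)))
    (hb_zero : b 0 = 0)
    (hstab : ∀ a₁ a₂ : X, dist a₁ a₂ ≤ b (dist (G a₁) (G a₂)))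
    (adag : X)
    (μ : ℕ → Measure X) (hμ : ∀ n, IsProbabilityMeasure (μ n))
    (ε : ℕ → ℝ) (hε : ∀ n, 0 < ε n)
    (hcons : Tendsto (fun n => ((μ n).map G) {p : Y | dist p (G adag) ≤ ε n})
      atTop (nhds 1)) :
    Tendsto (fun n => (μ n) {a : X | dist a adag ≤ b (ε n)}) atTop (nhds 1) := by
  have hle : ∀ n, ((μ n).map G) {p : Y | dist p (G adag) ≤ ε n}
      ≤ (μ n) {a : X | dist a adag ≤ b (ε n)} := by
    intro n
    have hmeas : MeasurableSet {p : Y | dist p (G adag) ≤ ε n} :=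
      (isClosed_le (continuous_id.dist continuous_const) continuous_const).measurableSet
    rw [Measure.map_apply hG hmeas]
    apply measure_mono
    intro a ha
    simp only [Set.mem_preimage, Set.mem_setOf_eq] at ha ⊢
    exact (hstab a adag).trans (hb_mono dist_nonneg (le_of_lt (hε n)) ha)
  exact tendsto_of_tendsto_of_tendsto_of_le_of_le hcons tendsto_const_nhds hle
    fun n => prob_le_one
end

section
/- Let E be a real separable Banach space, a₀ ∈ E, and (ψ_i)_{i≥1} a sequence in E with ‖ψ_i‖ ≤ 1 for all i. Let (γ_i)_{i≥1} be a non-increasing sequence of strictly positive reals such that ∑_{i≥1} γ_i^{ν̃} < ∞ for some ν̃ ∈ (0,1). Let μ₀ be the law on E of the random series a₀ + ∑_{i≥1} γ_i z_i ψ_i, where the z_i are independent and uniformly distributed on [−1,1]; that is, μ₀ is the pushforward of the countable product of uniform probability measures on [−1,1] under the map z ↦ a₀ + ∑_{i≥1} γ_i z_i ψ_i (the series converges absolutely since ∑ γ_i < ∞). Let z† ∈ [−1,1]^ℕ and a† = a₀ + ∑_{i≥1} γ_i z_i† ψ_i. Then for every ν with ν̃ < ν < 1 there exist C > 0 and ε₀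 > 0 such that for all ε ∈ (0, ε₀): μ₀({a ∈ E : ‖a − a†‖ ≤ ε}) ≥ exp(−C·ε^{−ν/(1−ν)}). -/
open MeasureTheory

private lemma vol_aux (z δ : ℝ) (hz : z ∈ Set.Icc (-1:ℝ) 1) (hδ : 0 < δ) (hδ2 : δ ≤ 2) :
    ENNReal.ofReal δ ≤ volume (Set.Icc (z - δ) (z + δ) ∩ Set.Icc (-1:ℝ) 1) := by
  rw [Set.Icc_inter_Icc, Real.volume_Icc]
  apply ENNReal.ofReal_le_ofReal
  obtain ⟨hz1, hz2⟩ := hz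
  rcases le_total (z + δ) 1 with h | h
  · have h1 : min (z + δ) 1 = z + δ := min_eq_left h
    have h2 : max (z - δ) (-1) ≤ z := max_le (by linarith) hz1
    rw [h1]; linarith
  · have h1 : min (z + δ) 1 = 1 := min_eq_right h
    rcases le_total (z - δ) (-1) with h' | h'
    · rw [h1, max_eq_right h']; linarith
    · rw [h1, max_eq_left h']; linarith

set_option maxHeartbeats 2000000 in
/-- Small ball probabilities for the uniform prior: if
`μ₀` is the law of the random series `a₀ + ∑ γ_i z_i ψ_i` with `z_i` i.i.d. uniform on `[-1,1]`
(the product measure `P` is characterized via its finite-dimensional cylinder probabilities),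
`‖ψ_i‖ ≤ 1`, `γ` non-increasing, positive and `ν₀`-summable for some `ν₀ ∈ (0,1)`, and
`a† = a₀ + ∑ γ_i z†_i ψ_i` with `z† ∈ [-1,1]^ℕ`, then for every `ν₀ < ν < 1`,
`μ₀ (ball_ε a†) ≥ exp(-C ε^{-ν/(1-ν)})` for all sufficiently small `ε > 0`. -/
theorem uniform_prior_small_ball
    {E : Type*} [NormedAddCommGroup E] [NormedSpace ℝ E] [CompleteSpace E]
    [SecondCountableTopology E] [MeasurableSpace E] [BorelSpace E]
    (a₀ : E) (ψ : ℕ → E) (hψ : ∀ i, ‖ψ i‖ ≤ 1)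
    (γ : ℕ → ℝ) (hγ_pos : ∀ i, 0 < γ i) (hγ_anti : Antitone γ)
    (ν₀ : ℝ) (hν₀ : ν₀ ∈ Set.Ioo (0 : ℝ) 1)
    (hγ_sum : Summable (fun i => γ i ^ ν₀))
    (P : Measure (ℕ → ℝ)) [IsProbabilityMeasure P]
    (hP : ∀ (s : Finset ℕ) (B : ℕ → Set ℝ), (∀ i, MeasurableSet (B i)) →
      P {z : ℕ → ℝ | ∀ i ∈ s, z i ∈ B i}
        = ∏ i ∈ s, ((2 : ENNReal)⁻¹ * volume (B i ∩ Set.Icc (-1 : ℝ) 1)))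
    (μ₀ : Measure E)
    (hμ₀ : μ₀ = P.map (fun z : ℕ → ℝ => a₀ + ∑' i : ℕ, (γ i * z i) • ψ i))
    (zdag : ℕ → ℝ) (hzdag : ∀ i, zdag i ∈ Set.Icc (-1 : ℝ) 1)
    (adag : E) (hadag : adag = a₀ + ∑' i : ℕ, (γ i * zdag i) • ψ i) :
    ∀ ν : ℝ, ν₀ < ν → ν < 1 →
      ∃ C : ℝ, 0 < C ∧ ∃ ε₀ : ℝ, 0 < ε₀ ∧ ∀ ε : ℝ, 0 < ε → ε < ε₀ →
        ENNReal.ofReal (Real.exp (-C * ε ^ (-(ν / (1 - ν)))))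
          ≤ μ₀ {a : E | ‖a - adag‖ ≤ ε} := by
  intro ν hν₀ν hν1
  obtain ⟨hν₀pos, hν₀1⟩ := hν₀
  -- Basic constants
  set K : ℝ := ∑' i, γ i ^ ν₀ with hK_def
  have hK_pos : 0 < K :=
    lt_of_lt_of_le (Real.rpow_pos_of_pos (hγ_pos 0) ν₀)
      (Summable.le_tsum hγ_sum 0 (fun j _ => Real.rpow_nonneg (hγ_pos j).le ν₀))
  -- (N+1) γ_N^ν₀ ≤ K
  have hKpart : ∀ N : ℕ, ((N : ℝ) + 1) * γ N ^ ν₀ ≤ K := by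
    intro N
    have h1 : ∑ i ∈ Finset.range (N + 1), γ N ^ ν₀ ≤ ∑ i ∈ Finset.range (N + 1), γ i ^ ν₀ := by
      apply Finset.sum_le_sum
      intro i hi
      exact Real.rpow_le_rpow (hγ_pos N).le (hγ_anti (Nat.lt_succ_iff.mp (Finset.mem_range.mp hi)))
        hν₀pos.le
    have h2 : ∑ i ∈ Finset.range (N + 1), γ i ^ ν₀ ≤ K :=
      Summable.sum_le_tsum _ (fun i _ => Real.rpow_nonneg (hγ_pos i).le ν₀) hγ_sum
    calc ((N : ℝ) + 1) * γ N ^ ν₀ = ∑ i ∈ Finset.range (N + 1), γ N ^ ν₀ := by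
          rw [Finset.sum_const, Finset.card_range]; push_cast; ring
      _ ≤ K := le_trans h1 h2
  -- pointwise bound on γ
  have hγN : ∀ N : ℕ, γ N ≤ (K / ((N : ℝ) + 1)) ^ (ν₀⁻¹) := by
    intro N
    have hN1 : (0 : ℝ) < (N : ℝ) + 1 := by positivity
    have h1 : γ N ^ ν₀ ≤ K / ((N : ℝ) + 1) := by
      rw [le_div_iff₀ hN1]; linarith [hKpart N]
    calc γ N = (γ N ^ ν₀) ^ (ν₀⁻¹) := by
          rw [← Real.rpow_mul (hγ_pos N).le, mul_inv_cancel₀ hν₀pos.ne', Real.rpow_one]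
      _ ≤ (K / ((N : ℝ) + 1)) ^ (ν₀⁻¹) :=
          Real.rpow_le_rpow (Real.rpow_nonneg (hγ_pos N).le ν₀) h1 (by positivity)
  -- γ is summable
  have hγ_summable : Summable γ := by
    have hs : Summable (fun i : ℕ => (K / ((i : ℝ) + 1)) ^ (ν₀⁻¹)) := by
      have heq : ∀ i : ℕ, (K / ((i : ℝ) + 1)) ^ (ν₀⁻¹)
          = K ^ (ν₀⁻¹) * (((i + 1 : ℕ) : ℝ)) ^ (-(ν₀⁻¹)) := by
        intro i
        rw [Real.div_rpow hK_pos.le (by positivity), Real.rpow_neg (by positivity),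
          div_eq_mul_inv]
        push_cast; ring_nf
      have hps : Summable (fun n : ℕ => ((n : ℝ)) ^ (-(ν₀⁻¹))) := by
        rw [Real.summable_nat_rpow]
        have : 1 < ν₀⁻¹ := (one_lt_inv₀ hν₀pos).mpr hν₀1
        linarith
      have := ((summable_nat_add_iff 1).mpr hps).mul_left (K ^ (ν₀⁻¹))
      exact this.congr (fun i => (heq i).symm)
    exact Summable.of_nonneg_of_le (fun i => (hγ_pos i).le) hγN hs
  set S : ℝ := ∑' i, γ i with hS_def
  have hS_pos : 0 < S :=
    lt_of_lt_of_le (hγ_pos 0) (Summable.le_tsum hγ_summable 0 (fun j _ => (hγ_pos j).le))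
  -- tail bound
  set q : ℝ := (1 - ν₀) / ν₀ with hq_def
  have hq_pos : 0 < q := by
    apply div_pos <;> linarith
  have hTail : ∀ N : ℕ, (∑' i, γ (i + N)) ≤ K * (K / ((N : ℝ) + 1)) ^ q := by
    intro N
    have hsum_shift : Summable (fun i => γ (i + N)) := (summable_nat_add_iff N).mpr hγ_summable
    have hsum_shift' : Summable (fun i => γ (i + N) ^ ν₀) :=
      (summable_nat_add_iff N).mpr hγ_sum
    have h1 : ∀ i : ℕ, γ (i + N) ≤ γ N ^ (1 - ν₀) * γ (i + N) ^ ν₀ := by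
      intro i
      have : γ (i + N) = γ (i + N) ^ (1 - ν₀) * γ (i + N) ^ ν₀ := by
        rw [← Real.rpow_add (hγ_pos _)]; simp
      conv_lhs => rw [this]
      apply mul_le_mul_of_nonneg_right _ (Real.rpow_nonneg (hγ_pos _).le _)
      exact Real.rpow_le_rpow (hγ_pos _).le (hγ_anti (Nat.le_add_left N i)) (by linarith)
    have h2 : (∑' i, γ (i + N)) ≤ γ N ^ (1 - ν₀) * ∑' i, γ (i + N) ^ ν₀ := by
      rw [← tsum_mul_left]
      exact Summable.tsum_le_tsum h1 hsum_shift (hsum_shift'.mul_left _)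
    have h3 : (∑' i, γ (i + N) ^ ν₀) ≤ K := by
      have := (Summable.sum_add_tsum_nat_add (f := fun i => γ i ^ ν₀) N hγ_sum)
      have hnn : 0 ≤ ∑ i ∈ Finset.range N, γ i ^ ν₀ :=
        Finset.sum_nonneg (fun i _ => Real.rpow_nonneg (hγ_pos i).le _)
      linarith [this]
    have h4 : γ N ^ (1 - ν₀) ≤ (K / ((N : ℝ) + 1)) ^ q := by
      have := Real.rpow_le_rpow (hγ_pos N).le (hγN N) (by linarith : (0:ℝ) ≤ 1 - ν₀)
      calc γ N ^ (1 - ν₀) ≤ ((K / ((N : ℝ) + 1)) ^ (ν₀⁻¹)) ^ (1 - ν₀) := this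
        _ = (K / ((N : ℝ) + 1)) ^ q := by
            rw [← Real.rpow_mul (by positivity)]
            congr 1
            field_simp [hq_def]
            rw [hq_def]; field_simp
    calc (∑' i, γ (i + N)) ≤ γ N ^ (1 - ν₀) * ∑' i, γ (i + N) ^ ν₀ := h2
      _ ≤ (K / ((N : ℝ) + 1)) ^ q * K := by
          apply mul_le_mul h4 h3 (tsum_nonneg (fun i => Real.rpow_nonneg (hγ_pos _).le _))
            (by positivity)
      _ = K * (K / ((N : ℝ) + 1)) ^ q := mul_comm _ _
  -- the series map
  set f : (ℕ → ℝ) → E := fun z => a₀ + ∑' i : ℕ, (γ i * z i) • ψ i with hf_def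
  -- a.e. each coordinate lies in [-1,1]
  have hCi : ∀ i : ℕ, P {z : ℕ → ℝ | z i ∈ Set.Icc (-1:ℝ) 1} = 1 := by
    intro i
    have h := hP {i} (fun _ => Set.Icc (-1:ℝ) 1) (fun _ => measurableSet_Icc)
    have hset : {z : ℕ → ℝ | ∀ j ∈ ({i} : Finset ℕ), z j ∈ Set.Icc (-1:ℝ) 1}
        = {z : ℕ → ℝ | z i ∈ Set.Icc (-1:ℝ) 1} := by
      ext z; simp
    rw [hset] at h
    rw [h, Finset.prod_singleton, Set.inter_self, Real.volume_Icc]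
    norm_num
    exact ENNReal.inv_mul_cancel (by norm_num) (by norm_num)
  have hCi_meas : ∀ i : ℕ, MeasurableSet {z : ℕ → ℝ | z i ∈ Set.Icc (-1:ℝ) 1} :=
    fun i => (measurable_pi_apply i) measurableSet_Icc
  have hae : ∀ᵐ z ∂P, ∀ i, z i ∈ Set.Icc (-1:ℝ) 1 := by
    rw [MeasureTheory.ae_all_iff]
    intro i
    have hcompl : P {z : ℕ → ℝ | z i ∈ Set.Icc (-1:ℝ) 1}ᶜ = 0 := by
      rw [measure_compl (hCi_meas i) (measure_ne_top _ _), hCi i, measure_univ]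
      simp
    exact MeasureTheory.ae_iff.mpr hcompl
  -- summability of the series for coordinates in [-1,1]
  have hsum_z : ∀ z : ℕ → ℝ, (∀ i, z i ∈ Set.Icc (-1:ℝ) 1) →
      Summable (fun i => (γ i * z i) • ψ i) := by
    intro z hz
    apply Summable.of_norm_bounded hγ_summable
    intro i
    rw [norm_smul, Real.norm_eq_abs, abs_mul, abs_of_pos (hγ_pos i)]
    have h1 : |z i| ≤ 1 := abs_le.mpr ⟨(hz i).1, (hz i).2⟩
    calc γ i * |z i| * ‖ψ i‖ ≤ γ i * 1 * 1 := by
          apply mul_le_mul (mul_le_mul_of_nonneg_left h1 (hγ_pos i).le) (hψ i)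
            (norm_nonneg _) (mul_nonneg (hγ_pos i).le zero_le_one)
      _ = γ i := by ring
  -- a.e. measurability of f
  have hf_meas : AEMeasurable f P := by
    have hFn : ∀ n : ℕ, Measurable
        (fun z : ℕ → ℝ => a₀ + ∑ i ∈ Finset.range n, (γ i * z i) • ψ i) := by
      intro n
      apply measurable_const.add
      apply Finset.measurable_sum
      intro i _
      exact ((measurable_const.mul (measurable_pi_apply i)).smul_const (ψ i))
    apply aemeasurable_of_tendsto_metrizable_ae Filter.atTop (fun n => (hFn n).aemeasurable)
    filter_upwards [hae] with z hz
    exact (Filter.Tendsto.const_add a₀ ((hsum_z z hz).hasSum.tendsto_sum_nat))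
  -- exponents
  set r : ℝ := ν / (1 - ν) with hr_def
  have h1ν : (0:ℝ) < 1 - ν := by linarith
  have h1ν₀ : (0:ℝ) < 1 - ν₀ := by linarith
  have hq_inv : q⁻¹ = ν₀ / (1 - ν₀) := by rw [hq_def, inv_div]
  have hqr : q⁻¹ < r := by
    rw [hq_inv, hr_def, div_lt_div_iff₀ h1ν₀ h1ν]
    nlinarith
  set η : ℝ := r - q⁻¹ with hη_def
  have hη_pos : 0 < η := by simp [hη_def]; linarith
  -- the constants
  set c₂ : ℝ := K * (4 * K) ^ q⁻¹ + 1 with hc₂_def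
  set c₄ : ℝ := |Real.log (4 * S)| + η⁻¹ with hc₄_def
  have hc₂_pos : 0 < c₂ := by
    rw [hc₂_def]
    have : 0 < K * (4 * K) ^ q⁻¹ := by positivity
    linarith
  have hc₄_pos : 0 < c₄ := by
    rw [hc₄_def]
    have h1 : 0 ≤ |Real.log (4 * S)| := abs_nonneg _
    have h2 : 0 < η⁻¹ := by positivity
    linarith
  refine ⟨c₂ * c₄, mul_pos hc₂_pos hc₄_pos, min 1 (2 * S), by positivity, ?_⟩
  intro ε hε hεlt
  have hε1 : ε < 1 := lt_of_lt_of_le hεlt (min_le_left _ _)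
  have hε2S : ε < 2 * S := lt_of_lt_of_le hεlt (min_le_right _ _)
  -- parameters
  set δ : ℝ := ε / (2 * S) with hδ_def
  have hδ_pos : 0 < δ := by positivity
  have hδ2 : δ ≤ 2 := by
    rw [hδ_def, div_le_iff₀ (by positivity)]
    linarith
  set N : ℕ := ⌈K * (4 * K / ε) ^ q⁻¹⌉₊ with hN_def
  have hw_pos : 0 < (4 * K / ε) ^ q⁻¹ := Real.rpow_pos_of_pos (by positivity) _
  have hNc : K * (4 * K / ε) ^ q⁻¹ ≤ (N : ℝ) := Nat.le_ceil _
  -- tail smaller than ε / 4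
  have hTN : (∑' i, γ (i + N)) ≤ ε / 4 := by
    have hN1 : K * (4 * K / ε) ^ q⁻¹ ≤ (N : ℝ) + 1 := by linarith
    have h1 : K / ((N : ℝ) + 1) ≤ (ε / (4 * K)) ^ q⁻¹ := by
      have e1 : K / ((N : ℝ) + 1) ≤ K / (K * (4 * K / ε) ^ q⁻¹) := by
        gcongr
      have e2 : K / (K * (4 * K / ε) ^ q⁻¹) = (ε / (4 * K)) ^ q⁻¹ := by
        rw [div_mul_cancel_left₀ hK_pos.ne', ← Real.inv_rpow (by positivity), inv_div]
      rw [e2] at e1; exact e1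
    have h2 : (K / ((N : ℝ) + 1)) ^ q ≤ ε / (4 * K) := by
      calc (K / ((N : ℝ) + 1)) ^ q ≤ ((ε / (4 * K)) ^ q⁻¹) ^ q :=
            Real.rpow_le_rpow (by positivity) h1 hq_pos.le
        _ = ε / (4 * K) := by
            rw [← Real.rpow_mul (by positivity), inv_mul_cancel₀ hq_pos.ne', Real.rpow_one]
    calc (∑' i, γ (i + N)) ≤ K * (K / ((N : ℝ) + 1)) ^ q := hTail N
      _ ≤ K * (ε / (4 * K)) := mul_le_mul_of_nonneg_left h2 hK_pos.le
      _ = ε / 4 := by field_simp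
  -- size of N
  have hεneg : ∀ t : ℝ, 0 ≤ t → (1:ℝ) ≤ ε ^ (-t) := by
    intro t ht
    calc (1:ℝ) = ε ^ (0:ℝ) := (Real.rpow_zero ε).symm
      _ ≤ ε ^ (-t) := Real.rpow_le_rpow_of_exponent_ge hε hε1.le (by linarith)
  have hN_le : (N : ℝ) ≤ c₂ * ε ^ (-q⁻¹) := by
    have hceil : (N : ℝ) ≤ K * (4 * K / ε) ^ q⁻¹ + 1 := (Nat.ceil_lt_add_one (by positivity)).le
    have hw : (4 * K / ε) ^ q⁻¹ = (4 * K) ^ q⁻¹ * ε ^ (-q⁻¹) := by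
      rw [Real.div_rpow (by positivity) hε.le, Real.rpow_neg hε.le, div_eq_mul_inv]
    have h1 : (1:ℝ) ≤ ε ^ (-q⁻¹) := hεneg q⁻¹ (by positivity)
    have h2 : (0:ℝ) ≤ K * (4 * K) ^ q⁻¹ := by positivity
    rw [hw] at hceil
    rw [hc₂_def]
    have h4 : (K * (4 * K) ^ q⁻¹ + 1) * ε ^ (-q⁻¹)
        = K * ((4 * K) ^ q⁻¹ * ε ^ (-q⁻¹)) + ε ^ (-q⁻¹) := by ring
    rw [h4]
    linarith
  -- the cylinder event
  have hPA : ENNReal.ofReal ((δ / 2) ^ N)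
      ≤ P {z : ℕ → ℝ | ∀ i ∈ Finset.range N, z i ∈ Set.Icc (zdag i - δ) (zdag i + δ)} := by
    rw [hP (Finset.range N) (fun i => Set.Icc (zdag i - δ) (zdag i + δ))
      (fun i => measurableSet_Icc)]
    calc ENNReal.ofReal ((δ / 2) ^ N) = (ENNReal.ofReal (δ / 2)) ^ N :=
          ENNReal.ofReal_pow (by positivity) N
      _ = ∏ _i ∈ Finset.range N, ENNReal.ofReal (δ / 2) := by
          rw [Finset.prod_const, Finset.card_range]
      _ ≤ ∏ i ∈ Finset.range N,
            (2⁻¹ * volume (Set.Icc (zdag i - δ) (zdag i + δ) ∩ Set.Icc (-1:ℝ) 1)) := by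
          apply Finset.prod_le_prod'
          intro i _
          have h1 : ENNReal.ofReal (δ / 2) = 2⁻¹ * ENNReal.ofReal δ := by
            rw [ENNReal.ofReal_div_of_pos (by norm_num : (0:ℝ) < 2), ENNReal.ofReal_ofNat,
              div_eq_mul_inv, mul_comm]
          rw [h1]
          exact mul_le_mul_right (vol_aux (zdag i) δ (hzdag i) hδ_pos hδ2) _
  -- event implies closeness
  have hAsub : ∀ z : ℕ → ℝ, (∀ i ∈ Finset.range N, z i ∈ Set.Icc (zdag i - δ) (zdag i + δ)) →
      (∀ i, z i ∈ Set.Icc (-1:ℝ) 1) → ‖f z - adag‖ ≤ ε := by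
    intro z hzA hzS
    have hu : Summable (fun i => (γ i * z i) • ψ i) := hsum_z z hzS
    have hv : Summable (fun i => (γ i * zdag i) • ψ i) := hsum_z zdag hzdag
    have hfz : f z - adag = ∑' i, ((γ i * (z i - zdag i)) • ψ i) := by
      rw [hadag, hf_def]
      have h0 : (a₀ + ∑' i, (γ i * z i) • ψ i) - (a₀ + ∑' i, (γ i * zdag i) • ψ i)
          = (∑' i, (γ i * z i) • ψ i) - (∑' i, (γ i * zdag i) • ψ i) := by abel
      rw [h0, ← Summable.tsum_sub hu hv]
      congr 1
      funext i
      rw [← sub_smul, ← mul_sub]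
    -- bound functions
    have hb_le : ∀ i, ‖(γ i * (z i - zdag i)) • ψ i‖ ≤ γ i * |z i - zdag i| := by
      intro i
      rw [norm_smul, Real.norm_eq_abs, abs_mul, abs_of_pos (hγ_pos i)]
      calc γ i * |z i - zdag i| * ‖ψ i‖ ≤ γ i * |z i - zdag i| * 1 :=
            mul_le_mul_of_nonneg_left (hψ i) (mul_nonneg (hγ_pos i).le (abs_nonneg _))
        _ = γ i * |z i - zdag i| := by ring
    have hb2 : ∀ i, γ i * |z i - zdag i| ≤ 2 * γ i := by
      intro i
      have h1 : |z i - zdag i| ≤ 2 := by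
        have := (hzS i); have := (hzdag i)
        rw [abs_le]
        constructor <;> [nlinarith [(hzS i).1, (hzdag i).2]; nlinarith [(hzS i).2, (hzdag i).1]]
      nlinarith [hγ_pos i]
    have hb_sum : Summable (fun i => γ i * |z i - zdag i|) :=
      Summable.of_nonneg_of_le (fun i => mul_nonneg (hγ_pos i).le (abs_nonneg _)) hb2
        (hγ_summable.mul_left 2)
    have hw_sum : Summable (fun i => ‖(γ i * (z i - zdag i)) • ψ i‖) :=
      Summable.of_nonneg_of_le (fun i => norm_nonneg _) hb_le hb_sum
    -- head bound
    have hhead : ∑ i ∈ Finset.range N, γ i * |z i - zdag i| ≤ ε / 2 := by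
      have h2 : ∑ i ∈ Finset.range N, γ i * |z i - zdag i|
          ≤ ∑ i ∈ Finset.range N, γ i * δ := by
        apply Finset.sum_le_sum
        intro i hi
        apply mul_le_mul_of_nonneg_left _ (hγ_pos i).le
        have := hzA i hi
        rw [abs_le]
        exact ⟨by linarith [this.1], by linarith [this.2]⟩
      have h3 : ∑ i ∈ Finset.range N, γ i * δ = (∑ i ∈ Finset.range N, γ i) * δ := by
        rw [Finset.sum_mul]
      have h4 : (∑ i ∈ Finset.range N, γ i) ≤ S :=
        Summable.sum_le_tsum _ (fun i _ => (hγ_pos i).le) hγ_summable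
      have h5 : (∑ i ∈ Finset.range N, γ i) * δ ≤ S * δ :=
        mul_le_mul_of_nonneg_right h4 hδ_pos.le
      have h6 : S * δ = ε / 2 := by
        rw [hδ_def]; field_simp
      linarith
    -- tail bound
    have htail : (∑' i, γ (i + N) * |z (i + N) - zdag (i + N)|) ≤ ε / 2 := by
      have hshift : Summable (fun i => γ (i + N) * |z (i + N) - zdag (i + N)|) :=
        (summable_nat_add_iff N).mpr hb_sum
      have hshiftγ : Summable (fun i => γ (i + N)) := (summable_nat_add_iff N).mpr hγ_summable
      have h1 : (∑' i, γ (i + N) * |z (i + N) - zdag (i + N)|) ≤ ∑' i, 2 * γ (i + N) :=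
        Summable.tsum_le_tsum (fun i => hb2 (i + N)) hshift (hshiftγ.mul_left 2)
      have h2 : (∑' i, 2 * γ (i + N)) = 2 * ∑' i, γ (i + N) := tsum_mul_left
      have h3 : 2 * (∑' i, γ (i + N)) ≤ 2 * (ε / 4) := by linarith [hTN]
      linarith
    calc ‖f z - adag‖ = ‖∑' i, ((γ i * (z i - zdag i)) • ψ i)‖ := by rw [hfz]
      _ ≤ ∑' i, ‖(γ i * (z i - zdag i)) • ψ i‖ := norm_tsum_le_tsum_norm hw_sum
      _ ≤ ∑' i, γ i * |z i - zdag i| := Summable.tsum_le_tsum hb_le hw_sum hb_sum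
      _ = (∑ i ∈ Finset.range N, γ i * |z i - zdag i|)
          + ∑' i, γ (i + N) * |z (i + N) - zdag (i + N)| :=
            (Summable.sum_add_tsum_nat_add N hb_sum).symm
      _ ≤ ε / 2 + ε / 2 := add_le_add hhead htail
      _ = ε := by ring
  -- pass to the measure μ₀
  have hball : ENNReal.ofReal ((δ / 2) ^ N) ≤ μ₀ {a : E | ‖a - adag‖ ≤ ε} := by
    have hset_eq : {a : E | ‖a - adag‖ ≤ ε} = Metric.closedBall adag ε := by
      ext a; simp [Metric.mem_closedBall, dist_eq_norm]
    rw [hμ₀, hset_eq, Measure.map_apply_of_aemeasurable hf_meas measurableSet_closedBall]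
    set A := {z : ℕ → ℝ | ∀ i ∈ Finset.range N, z i ∈ Set.Icc (zdag i - δ) (zdag i + δ)}
    set Sset := {z : ℕ → ℝ | ∀ i, z i ∈ Set.Icc (-1:ℝ) 1}
    have hsub : A ∩ Sset ⊆ f ⁻¹' Metric.closedBall adag ε := by
      rintro z ⟨hzA, hzS⟩
      simp only [Set.mem_preimage, Metric.mem_closedBall, dist_eq_norm]
      exact hAsub z hzA hzS
    have hnull : P Ssetᶜ = 0 := by
      have := MeasureTheory.ae_iff.mp hae
      simpa [Sset, Set.compl_setOf] using this
    calc ENNReal.ofReal ((δ / 2) ^ N) ≤ P A := hPA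
      _ ≤ P (A ∩ Sset) + P (A \ Sset) := measure_le_inter_add_diff P A Sset
      _ ≤ P (f ⁻¹' Metric.closedBall adag ε) + 0 := by
          apply add_le_add (measure_mono hsub)
          refine le_trans (measure_mono ?_) (le_of_eq hnull)
          exact fun z hz => hz.2
      _ = P (f ⁻¹' Metric.closedBall adag ε) := add_zero _
  -- final numeric comparison
  refine le_trans ?_ hball
  apply ENNReal.ofReal_le_ofReal
  have hδ2pos : (0:ℝ) < δ / 2 := by positivity
  have hδ4 : δ / 2 = ε / (4 * S) := by
    rw [hδ_def, div_div]
    congr 1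
    ring
  have hL_nonneg : 0 ≤ Real.log (4 * S / ε) := by
    apply Real.log_nonneg
    rw [le_div_iff₀ hε]
    nlinarith
  have hL_le : Real.log (4 * S / ε) ≤ c₄ * ε ^ (-η) := by
    have hlog_div : Real.log (4 * S / ε) = Real.log (4 * S) - Real.log ε :=
      Real.log_div (by positivity) hε.ne'
    have hεη : (1:ℝ) ≤ ε ^ (-η) := hεneg η hη_pos.le
    have hlog1 : -Real.log ε ≤ η⁻¹ * ε ^ (-η) := by
      have h := Real.log_le_sub_one_of_pos (show (0:ℝ) < ε ^ (-η) by positivity)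
      rw [Real.log_rpow hε] at h
      rw [inv_mul_eq_div, le_div_iff₀ hη_pos]
      nlinarith
    have hlog2 : Real.log (4 * S) ≤ |Real.log (4 * S)| := le_abs_self _
    have habs : (0:ℝ) ≤ |Real.log (4 * S)| := abs_nonneg _
    calc Real.log (4 * S / ε) = Real.log (4 * S) - Real.log ε := hlog_div
      _ ≤ |Real.log (4 * S)| * ε ^ (-η) + η⁻¹ * ε ^ (-η) := by nlinarith
      _ = c₄ * ε ^ (-η) := by rw [hc₄_def]; ring
  have hmain : (N : ℝ) * Real.log (4 * S / ε) ≤ (c₂ * c₄) * ε ^ (-(ν / (1 - ν))) := by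
    have h := mul_le_mul hN_le hL_le hL_nonneg (by positivity)
    calc (N : ℝ) * Real.log (4 * S / ε) ≤ (c₂ * ε ^ (-q⁻¹)) * (c₄ * ε ^ (-η)) := h
      _ = (c₂ * c₄) * (ε ^ (-q⁻¹) * ε ^ (-η)) := by ring
      _ = (c₂ * c₄) * ε ^ (-(ν / (1 - ν))) := by
          rw [← Real.rpow_add hε]
          congr 1
          rw [hη_def, hr_def]
          ring
  have hexp : (δ / 2) ^ N = Real.exp ((N : ℝ) * Real.log (δ / 2)) := by
    rw [Real.exp_nat_mul, Real.exp_log hδ2pos]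
  rw [hexp, Real.exp_le_exp]
  have hlogneg : Real.log (δ / 2) = -Real.log (4 * S / ε) := by
    rw [hδ4, ← Real.log_inv, inv_div]
  rw [hlogneg]
  nlinarith [hmain]
end

section
/- The ratio of convergent series ( ∑_{k=1}^∞ exp(−n/(2k) − 2k²) ) / ( ∑_{k=1}^∞ exp(−n/(8k) − k²) ) tends to 0 as n → ∞. -/
open Filter

private lemma summable_exp_aux (f : ℕ → ℝ) (hf : ∀ k, f k ≤ -(k : ℝ)) :
    Summable fun k => Real.exp (f k) :=
  Summable.of_nonneg_of_le (fun k => (Real.exp_pos _).le)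
    (fun k => Real.exp_le_exp.mpr (hf k)) Real.summable_exp_neg_nat

private lemma key_ineq {x m : ℝ} (hx : 1 ≤ x) (hm : 1 ≤ m) :
    3 / 8 * Real.sqrt x ≤ 3 * x / (8 * m) + m ^ 2 := by
  set s := Real.sqrt x with hs
  have hs1 : 1 ≤ s := Real.one_le_sqrt.mpr hx
  have hss : s * s = x := Real.mul_self_sqrt (by linarith)
  have hm0 : 0 < m := by linarith
  rcases le_total m s with h | h
  · have h1 : 3 / 8 * s ≤ 3 * x / (8 * m) := by
      rw [le_div_iff₀ (by positivity)]
      nlinarith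
    nlinarith
  · have h2 : 0 ≤ 3 * x / (8 * m) := by positivity
    nlinarith

/-- The ratio of convergent series
`(∑_{k≥1} exp(-n/(2k) - 2k²)) / (∑_{k≥1} exp(-n/(8k) - k²))` tends to `0` as `n → ∞`. -/
theorem ratio_of_series_tendsto_zero :
    Tendsto (fun n : ℕ =>
        (∑' k : ℕ, Real.exp (-(n : ℝ) / (2 * ((k : ℝ) + 1)) - 2 * ((k : ℝ) + 1) ^ 2))
          / (∑' k : ℕ, Real.exp (-(n : ℝ) / (8 * ((k : ℝ) + 1)) - ((k : ℝ) + 1) ^ 2)))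
      atTop (nhds 0) := by
  have hnum : ∀ n : ℕ, Summable (fun k : ℕ =>
      Real.exp (-(n : ℝ) / (2 * ((k : ℝ) + 1)) - 2 * ((k : ℝ) + 1) ^ 2)) := by
    intro n
    apply summable_exp_aux
    intro k
    have h1 : (0 : ℝ) ≤ (k : ℝ) := Nat.cast_nonneg k
    have h2 : (0 : ℝ) ≤ (n : ℝ) := Nat.cast_nonneg n
    have h3 : -(n : ℝ) / (2 * ((k : ℝ) + 1)) ≤ 0 :=
      div_nonpos_of_nonpos_of_nonneg (by linarith) (by positivity)
    nlinarith
  have hden : ∀ n : ℕ, Summable (fun k : ℕ =>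
      Real.exp (-(n : ℝ) / (8 * ((k : ℝ) + 1)) - ((k : ℝ) + 1) ^ 2)) := by
    intro n
    apply summable_exp_aux
    intro k
    have h1 : (0 : ℝ) ≤ (k : ℝ) := Nat.cast_nonneg k
    have h2 : (0 : ℝ) ≤ (n : ℝ) := Nat.cast_nonneg n
    have h3 : -(n : ℝ) / (8 * ((k : ℝ) + 1)) ≤ 0 :=
      div_nonpos_of_nonpos_of_nonneg (by linarith) (by positivity)
    nlinarith
  have hden_pos : ∀ n : ℕ, 0 < ∑' k : ℕ,
      Real.exp (-(n : ℝ) / (8 * ((k : ℝ) + 1)) - ((k : ℝ) + 1) ^ 2) := by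
    intro n
    exact Summable.tsum_pos (hden n) (fun k => (Real.exp_pos _).le) 0 (Real.exp_pos _)
  apply squeeze_zero' (g := fun n : ℕ => Real.exp (-(3 / 8 * Real.sqrt n)))
  · filter_upwards with n
    exact div_nonneg (tsum_nonneg fun k => (Real.exp_pos _).le) (hden_pos n).le
  · filter_upwards [eventually_ge_atTop 1] with n hn
    rw [div_le_iff₀ (hden_pos n)]
    have hle : ∀ k : ℕ,
        Real.exp (-(n : ℝ) / (2 * ((k : ℝ) + 1)) - 2 * ((k : ℝ) + 1) ^ 2) ≤
        Real.exp (-(3 / 8 * Real.sqrt n)) *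
          Real.exp (-(n : ℝ) / (8 * ((k : ℝ) + 1)) - ((k : ℝ) + 1) ^ 2) := by
      intro k
      rw [← Real.exp_add, Real.exp_le_exp]
      have hm : (1 : ℝ) ≤ (k : ℝ) + 1 := by
        have : (0 : ℝ) ≤ (k : ℝ) := Nat.cast_nonneg k
        linarith
      have hx : (1 : ℝ) ≤ (n : ℝ) := by exact_mod_cast hn
      have hkey := key_ineq hx hm
      have hm0 : ((k : ℝ) + 1) ≠ 0 := by positivity
      have hsplit : -(n : ℝ) / (2 * ((k : ℝ) + 1)) - 2 * ((k : ℝ) + 1) ^ 2 =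
          -(3 * (n : ℝ) / (8 * ((k : ℝ) + 1)) + ((k : ℝ) + 1) ^ 2) +
          (-(n : ℝ) / (8 * ((k : ℝ) + 1)) - ((k : ℝ) + 1) ^ 2) := by
        field_simp
        ring
      rw [hsplit]
      linarith
    calc (∑' k : ℕ, Real.exp (-(n : ℝ) / (2 * ((k : ℝ) + 1)) - 2 * ((k : ℝ) + 1) ^ 2))
        ≤ ∑' k : ℕ, Real.exp (-(3 / 8 * Real.sqrt n)) *
            Real.exp (-(n : ℝ) / (8 * ((k : ℝ) + 1)) - ((k : ℝ) + 1) ^ 2) :=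
          Summable.tsum_le_tsum hle (hnum n) ((hden n).mul_left _)
      _ = Real.exp (-(3 / 8 * Real.sqrt n)) *
            ∑' k : ℕ, Real.exp (-(n : ℝ) / (8 * ((k : ℝ) + 1)) - ((k : ℝ) + 1) ^ 2) :=
          tsum_mul_left
  · have h1 : Tendsto (fun n : ℕ => Real.sqrt n) atTop atTop := by
      have := tendsto_rpow_atTop (y := (1 / 2 : ℝ)) (by norm_num)
      have h2 := this.comp (tendsto_natCast_atTop_atTop (R := ℝ))
      refine h2.congr fun n => ?_
      simp [Real.rpow_natCast, Real.sqrt_eq_rpow]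
    have h2 : Tendsto (fun n : ℕ => -(3 / 8 * Real.sqrt n)) atTop atBot :=
      tendsto_neg_atBot_iff.mpr (h1.const_mul_atTop (by norm_num))
    exact Real.tendsto_exp_atBot.comp h2
end

section
/- Let β ∈ (0,1], L > 0, K > 0, ε > 0, and set Δx = (ε/(4L))^{1/β}; assume Δx ≤ 1. Let h : [0,1] → ℝ be continuous with |h(x) − h(y)| ≤ 2L·|x − y|^β for all x, y ∈ [0,1] and with sup_{x∈[0,1]} |h(x)| ≥ ε. Let (x_i)_{i≥1} be a sequence in [0,1] such that for every n ≥ 1 and all 0 ≤ u < v ≤ 1 with v − u ≥ 1/(Kn), there exists i ∈ {1,…,n} with x_i ∈ (u,v). Then for every n ≥ 1 with K·n·Δx ≥ 1 one has ∑_{i=1}^n h(x_i)² ≥ ε²·K·n·Δx/8. -/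
/-- Quantitative lower bound on the data misfit: if `h` is continuous on
`[0,1]`, satisfies `|h(x)-h(y)| ≤ 2L|x-y|^β`, has sup norm at least `ε`, and the design
points are such that every interval of length at least `1/(Kn)` contains one of the first
`n` points, then `∑_{i=1}^n h(x_i)² ≥ ε²·K·n·Δx/8` where `Δx = (ε/(4L))^{1/β}`, provided
`Δx ≤ 1` and `K·n·Δx ≥ 1`. -/
theorem misfit_lower_bound
    (β L K ε : ℝ) (hβ : β ∈ Set.Ioc (0 : ℝ) 1) (hL : 0 < L) (hK : 0 < K) (hε : 0 < ε)
    (hΔx : (ε / (4 * L)) ^ (1 / β) ≤ 1)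
    (h : ℝ → ℝ) (hcont : ContinuousOn h (Set.Icc (0 : ℝ) 1))
    (hhold : ∀ x ∈ Set.Icc (0 : ℝ) 1, ∀ y ∈ Set.Icc (0 : ℝ) 1,
      |h x - h y| ≤ 2 * L * |x - y| ^ β)
    (hsup : ε ≤ sSup ((fun t => |h t|) '' Set.Icc (0 : ℝ) 1))
    (x : ℕ → ℝ) (hx : ∀ i, x i ∈ Set.Icc (0 : ℝ) 1)
    (hdesign : ∀ n : ℕ, 1 ≤ n → ∀ u v : ℝ, 0 ≤ u → u < v → v ≤ 1 →
      1 / (K * n) ≤ v - u → ∃ i ∈ Finset.Icc 1 n, x i ∈ Set.Ioo u v) :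
    ∀ n : ℕ, 1 ≤ n → 1 ≤ K * n * (ε / (4 * L)) ^ (1 / β) →
      ε ^ 2 * K * n * (ε / (4 * L)) ^ (1 / β) / 8 ≤
        ∑ i ∈ Finset.Icc 1 n, h (x i) ^ 2 := by
  obtain ⟨hβ0, hβ1⟩ := hβ
  set Δx : ℝ := (ε / (4 * L)) ^ (1 / β) with hΔxdef
  have hratio : 0 < ε / (4 * L) := by positivity
  have hΔx0 : 0 < Δx := Real.rpow_pos_of_pos hratio _
  have hΔxβ : Δx ^ β = ε / (4 * L) := by
    rw [hΔxdef, ← Real.rpow_mul hratio.le, one_div_mul_cancel hβ0.ne', Real.rpow_one]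
  -- maximizer
  obtain ⟨t₀, ht₀mem, ht₀max⟩ := isCompact_Icc.exists_isMaxOn
    (Set.nonempty_Icc.2 zero_le_one) hcont.abs
  have hεt₀ : ε ≤ |h t₀| := by
    refine hsup.trans (Real.sSup_le ?_ (abs_nonneg _))
    rintro z ⟨y, hy, rfl⟩
    exact ht₀max hy
  have hnear : ∀ y ∈ Set.Icc (0:ℝ) 1, |y - t₀| ≤ Δx → ε / 2 ≤ |h y| := by
    intro y hy hyd
    have h1 : |h t₀ - h y| ≤ 2 * L * |t₀ - y| ^ β := hhold t₀ ht₀mem y hy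
    have h2 : |t₀ - y| ^ β ≤ Δx ^ β := by
      apply Real.rpow_le_rpow (abs_nonneg _) _ hβ0.le
      rwa [abs_sub_comm]
    have h3 : 2 * L * (ε / (4 * L)) = ε / 2 := by field_simp; ring
    have h4 : 2 * L * |t₀ - y| ^ β ≤ 2 * L * (Δx ^ β) :=
      mul_le_mul_of_nonneg_left h2 (by positivity)
    rw [hΔxβ, h3] at h4
    have h5 := abs_sub_abs_le_abs_sub (h t₀) (h y)
    linarith
  -- the interval [u, u+Δx]
  set u : ℝ := min t₀ (1 - Δx) with hu
  have hu0 : 0 ≤ u := le_min ht₀mem.1 (by linarith)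
  have huΔ : u + Δx ≤ 1 := by have := min_le_right t₀ (1 - Δx); linarith
  have ht₀l : u ≤ t₀ := min_le_left _ _
  have ht₀r : t₀ ≤ u + Δx := by
    rcases le_or_gt t₀ (1 - Δx) with hc | hc
    · have : u = t₀ := min_eq_left hc
      linarith
    · have : u = 1 - Δx := min_eq_right hc.le
      have := ht₀mem.2
      linarith
  intro n hn hKn
  have hn' : (0:ℝ) < n := by exact_mod_cast hn
  set m : ℕ := ⌊K * n * Δx⌋₊ with hmdef
  have hKnΔ0 : (0:ℝ) ≤ K * n * Δx := by positivity
  have hmle : (m:ℝ) ≤ K * n * Δx := Nat.floor_le hKnΔ0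
  have hm1 : 1 ≤ m := Nat.le_floor (by exact_mod_cast hKn)
  have hm0 : (0:ℝ) < m := by exact_mod_cast Nat.lt_of_lt_of_le Nat.zero_lt_one hm1
  have hmge : K * n * Δx / 2 ≤ (m:ℝ) := by
    have h1 : K * n * Δx - 1 < (m:ℝ) := Nat.sub_one_lt_floor _
    have h2 : (1:ℝ) ≤ m := by exact_mod_cast hm1
    rcases le_or_gt (K * n * Δx) 2 with hc | hc <;> linarith
  have hlen0 : 0 < Δx / m := by positivity
  have hlen : 1 / (K * n) ≤ Δx / m := by
    rw [div_le_div_iff₀ (by positivity) hm0]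
    nlinarith [hmle]
  -- choose design points in subintervals
  have key : ∀ j : ℕ, j < m → ∃ i ∈ Finset.Icc 1 n,
      x i ∈ Set.Ioo (u + j * (Δx / m)) (u + (j + 1) * (Δx / m)) := by
    intro j hj
    have hjm : ((j:ℝ) + 1) ≤ (m:ℝ) := by exact_mod_cast hj
    have hub : ((j:ℝ) + 1) * (Δx / m) ≤ Δx := by
      have h1 : ((j:ℝ) + 1) * (Δx / m) ≤ (m:ℝ) * (Δx / m) :=
        mul_le_mul_of_nonneg_right hjm hlen0.le
      have h2 : (m:ℝ) * (Δx / m) = Δx := by field_simp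
      linarith
    refine hdesign n hn _ _ ?_ ?_ ?_ ?_
    · have : (0:ℝ) ≤ (j:ℝ) * (Δx / m) := by positivity
      linarith
    · nlinarith [hlen0]
    · linarith
    · have : u + ((j:ℝ) + 1) * (Δx / m) - (u + (j:ℝ) * (Δx / m)) = Δx / m := by ring
      linarith
  choose f hf1 hf2 using key
  set g : Fin m → ℕ := fun j => f j.1 j.2 with hg
  have hgmono : ∀ j j' : Fin m, (j:ℕ) < (j':ℕ) → x (g j) < x (g j') := by
    intro j j' hjj
    have h1 := (hf2 j.1 j.2).2
    have h2 := (hf2 j'.1 j'.2).1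
    have hc : ((j:ℕ):ℝ) + 1 ≤ ((j':ℕ):ℝ) := by exact_mod_cast hjj
    have h3 : (((j:ℕ):ℝ) + 1) * (Δx / m) ≤ ((j':ℕ):ℝ) * (Δx / m) :=
      mul_le_mul_of_nonneg_right hc hlen0.le
    calc x (g j) < u + (((j:ℕ):ℝ) + 1) * (Δx / m) := h1
      _ ≤ u + ((j':ℕ):ℝ) * (Δx / m) := by linarith
      _ < x (g j') := h2
  have hginj : Function.Injective g := by
    intro j j' hEq
    rcases lt_trichotomy (j:ℕ) (j':ℕ) with hc | hc | hc
    · exact absurd (congrArg x hEq) (hgmono j j' hc).ne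
    · exact Fin.ext hc
    · exact absurd (congrArg x hEq) (hgmono j' j hc).ne'
  have hterm : ∀ j : Fin m, ε ^ 2 / 4 ≤ h (x (g j)) ^ 2 := by
    intro j
    have h1 := (hf2 j.1 j.2).1
    have h2 := (hf2 j.1 j.2).2
    have hjm : ((j:ℕ):ℝ) + 1 ≤ (m:ℝ) := by exact_mod_cast j.2
    have hub : (((j:ℕ):ℝ) + 1) * (Δx / m) ≤ Δx := by
      have ha : (((j:ℕ):ℝ) + 1) * (Δx / m) ≤ (m:ℝ) * (Δx / m) :=
        mul_le_mul_of_nonneg_right hjm hlen0.le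
      have hb : (m:ℝ) * (Δx / m) = Δx := by field_simp
      linarith
    have hlb : (0:ℝ) ≤ ((j:ℕ):ℝ) * (Δx / m) := by positivity
    have hdist : |x (g j) - t₀| ≤ Δx := by
      rw [abs_le]
      exact ⟨by linarith, by linarith⟩
    have habs : ε / 2 ≤ |h (x (g j))| := hnear _ (hx _) hdist
    have h4 : (ε / 2) ^ 2 ≤ |h (x (g j))| ^ 2 :=
      pow_le_pow_left₀ (by linarith) habs 2
    rw [sq_abs] at h4
    linarith
  -- sum bound
  have hsub : Finset.image g Finset.univ ⊆ Finset.Icc 1 n := by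
    intro i hi
    obtain ⟨j, _, rfl⟩ := Finset.mem_image.1 hi
    exact hf1 j.1 j.2
  have hsum1 : ∑ j : Fin m, h (x (g j)) ^ 2 ≤ ∑ i ∈ Finset.Icc 1 n, h (x i) ^ 2 := by
    have heq : ∑ i ∈ Finset.image g Finset.univ, h (x i) ^ 2
        = ∑ j : Fin m, h (x (g j)) ^ 2 :=
      Finset.sum_image (fun a _ b _ hab => hginj hab)
    rw [← heq]
    exact Finset.sum_le_sum_of_subset_of_nonneg hsub (fun i _ _ => sq_nonneg _)
  have hsum2 : (m:ℝ) * (ε ^ 2 / 4) ≤ ∑ j : Fin m, h (x (g j)) ^ 2 := by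
    calc (m:ℝ) * (ε ^ 2 / 4) = ∑ _j : Fin m, ε ^ 2 / 4 := by
          rw [Finset.sum_const, Finset.card_univ, Fintype.card_fin, nsmul_eq_mul]
      _ ≤ ∑ j : Fin m, h (x (g j)) ^ 2 := Finset.sum_le_sum (fun j _ => hterm j)
  calc ε ^ 2 * K * n * Δx / 8 = (ε ^ 2 / 4) * (K * n * Δx / 2) := by ring
    _ ≤ (ε ^ 2 / 4) * m := mul_le_mul_of_nonneg_left hmge (by positivity)
    _ ≤ ∑ i ∈ Finset.Icc 1 n, h (x i) ^ 2 := by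
        rw [mul_comm] at hsum2 ⊢
        linarith
end

section
/- Let λ ∈ (0,1) and e > 0 satisfy either (i) λ ≤ 1/2 and e > −1 + 2√2·√(1 − λ), or (ii) λ > 1/2 and e > 2 − 2λ. Then there exists p > 1 such that, setting q = p/(p − 1), the following hold simultaneously: λ·p < 2; (1 − λ)·q < e; e·(p − 1) + (λ − 1)·p > 0; and ((p − 2)/(2(p − 1)))·( 1 + (p − 1)/( e·(p − 1) + (λ − 1)·p ) ) < max( 1, e/(2 − 2λ) ). -/
/-- Feasibility of the Hölder/Young exponent in the posterior consistency
corollary for the small noise limit: under either `λ ≤ 1/2` and `e > -1 + 2√2·√(1-λ)`, or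
`λ > 1/2` and `e > 2 - 2λ`, there exists `p > 1` with conjugate `q = p/(p-1)` such that
`λp < 2`, `(1-λ)q < e`, `e(p-1) + (λ-1)p > 0`, and
`((p-2)/(2(p-1)))·(1 + (p-1)/(e(p-1)+(λ-1)p)) < max(1, e/(2-2λ))`. -/
theorem exponent_feasibility
    (lam e : ℝ) (hlam : lam ∈ Set.Ioo (0 : ℝ) 1) (he : 0 < e)
    (hcase : (lam ≤ 1 / 2 ∧ -1 + 2 * Real.sqrt 2 * Real.sqrt (1 - lam) < e)
      ∨ (1 / 2 < lam ∧ 2 - 2 * lam < e)) :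
    ∃ p : ℝ, 1 < p ∧
      lam * p < 2 ∧
      (1 - lam) * (p / (p - 1)) < e ∧
      0 < e * (p - 1) + (lam - 1) * p ∧
      (p - 2) / (2 * (p - 1)) * (1 + (p - 1) / (e * (p - 1) + (lam - 1) * p))
        < max 1 (e / (2 - 2 * lam)) := by
  obtain ⟨hl0, hl1⟩ := hlam
  by_cases hbig : 2 - 2 * lam < e
  · -- take p = 2
    refine ⟨2, one_lt_two, by linarith, ?_, by norm_num; linarith, ?_⟩
    · norm_num
      linarith
    · have h0 : ((2:ℝ) - 2) / (2 * (2 - 1)) *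
          (1 + (2 - 1) / (e * (2 - 1) + (lam - 1) * 2)) = 0 := by norm_num
      rw [h0]
      exact lt_max_of_lt_left one_pos
  · -- case e ≤ 2 - 2λ : must be in case (i)
    have he2 : e ≤ 2 - 2 * lam := le_of_not_gt hbig
    obtain ⟨hhalf, hs⟩ : lam ≤ 1 / 2 ∧ -1 + 2 * Real.sqrt 2 * Real.sqrt (1 - lam) < e := by
      rcases hcase with h | h
      · exact h
      · exact absurd h.2 hbig
    -- key squared inequality
    have hK : 8 * (1 - lam) < (e + 1) ^ 2 := by
      set s := Real.sqrt 2 * Real.sqrt (1 - lam) with hsdef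
      have hs0 : 0 ≤ s := by positivity
      have hs2 : s ^ 2 = 2 * (1 - lam) := by
        rw [hsdef, mul_pow, Real.sq_sqrt (by norm_num : (0:ℝ) ≤ 2),
          Real.sq_sqrt (by linarith : (0:ℝ) ≤ 1 - lam)]
      have h1 : 0 < e + 1 - 2 * s := by linarith
      have h2 : 0 < e + 1 + 2 * s := by linarith
      nlinarith [mul_pos h1 h2, hs2]
    have hd : 0 < 2 * (2 - lam - e) := by linarith
    have hd0 : (2 * (2 - lam - e)) ≠ 0 := ne_of_gt hd
    have h2e : 0 < 2 - lam - e := by linarith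
    have hn : 0 < e - 1 + 2 * lam := by
      by_contra hc
      push_neg at hc
      have ha : 0 ≤ 2 * (1 - lam) - (e + 1) := by linarith
      have hb : 0 ≤ 2 * (1 - lam) + (e + 1) := by linarith
      nlinarith [mul_nonneg ha hb, hK]
    have hn0 : (e - 1 + 2 * lam) ≠ 0 := ne_of_gt hn
    have hA : 0 < e ^ 2 + lam * e + 3 * lam - 3 := by
      nlinarith [hK, mul_nonneg (by linarith : (0:ℝ) ≤ 2 - 2 * lam - e)
        (by linarith : (0:ℝ) ≤ 2 - lam),
        mul_nonneg hl0.le (by linarith : (0:ℝ) ≤ 1 - 2 * lam)]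
    have hA0 : (e ^ 2 + lam * e + 3 * lam - 3) ≠ 0 := ne_of_gt hA
    set p : ℝ := 1 + (e - 1 + 2 * lam) / (2 * (2 - lam - e)) with hpdef
    have hu : 0 < (e - 1 + 2 * lam) / (2 * (2 - lam - e)) := div_pos hn hd
    have hp1 : 1 < p := by rw [hpdef]; linarith
    have hpm1 : p - 1 = (e - 1 + 2 * lam) / (2 * (2 - lam - e)) := by rw [hpdef]; ring
    have hp1' : (0:ℝ) < p - 1 := by rw [hpm1]; exact hu
    have hpval : p = (3 - e) / (2 * (2 - lam - e)) := by
      rw [hpdef]; field_simp; ring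
    have hE : e * (p - 1) + (lam - 1) * p
        = (e ^ 2 + lam * e + 3 * lam - 3) / (2 * (2 - lam - e)) := by
      rw [hpdef]; field_simp; ring
    have hEpos : 0 < e * (p - 1) + (lam - 1) * p := by
      rw [hE]; exact div_pos hA hd
    refine ⟨p, hp1, ?_, ?_, hEpos, ?_⟩
    · -- λ p < 2
      rw [hpval, ← mul_div_assoc, div_lt_iff₀ hd]
      nlinarith [mul_nonneg hl0.le (by linarith : (0:ℝ) ≤ 2 - 2 * lam - e)]
    · -- (1-λ) q < e
      have hq : p / (p - 1) = (3 - e) / (e - 1 + 2 * lam) := by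
        rw [hpm1, hpval]
        field_simp
        try ring
      rw [hq, ← mul_div_assoc, div_lt_iff₀ hn]
      nlinarith [hA]
    · -- the main inequality, with max = 1
      have hmax : max 1 (e / (2 - 2 * lam)) = 1 := by
        rw [max_eq_left]
        rw [div_le_one (by linarith : (0:ℝ) < 2 - 2 * lam)]
        linarith
      rw [hmax]
      have hfe : (p - 2) / (2 * (p - 1)) *
          (1 + (p - 1) / (e * (p - 1) + (lam - 1) * p))
          = ((p - 2) * ((e * (p - 1) + (lam - 1) * p) + (p - 1)))
            / (2 * (p - 1) * (e * (p - 1) + (lam - 1) * p)) := by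
        rw [one_add_div hEpos.ne', div_mul_div_comm]
        try ring
      rw [hfe, div_lt_one (by positivity)]
      have key : 2 * (p - 1) * (e * (p - 1) + (lam - 1) * p)
          - (p - 2) * ((e * (p - 1) + (lam - 1) * p) + (p - 1))
          = ((e + 1) ^ 2 - 8 * (1 - lam)) / (4 * (2 - lam - e)) := by
        rw [hpdef]
        field_simp
        ring
      have hKpos : 0 < ((e + 1) ^ 2 - 8 * (1 - lam)) / (4 * (2 - lam - e)) :=
        div_pos (by linarith) (by linarith)
      linarith [key ▸ hKpos]
end
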